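/- Let H be a finite simple graph with a matching M, and let F be the set of M-free vertices. If V_in(F) ∩ V_out(F) = ∅, then H contains no M-augmenting path; equivalently, if H contains an M-augmenting path between two free vertices, then some vertex of H is reachable from F both by an even-length alternating path and by an odd-length alternating path. -/

import Mathlib

open Finset
open scoped Classical

variable {V : Type*}

/-- `M` is a matching of the simple graph `G`: a set of edges of `G`,
no two of which share an endpoint. -/
def IsMatching (G : SimpleGraph V) (M : Finset (Sym2 V)) : Prop :=
  (M : Set (Sym2 V)) ⊆ G.edgeSet ∧
    ∀ e ∈ M, ∀ f ∈ M, e ≠ f → ∀ v : V, v ∈ e → v ∉ f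

/-- The total weight of a finite set of edges. -/
def mWeight (w : Sym2 V → ℝ) (M : Finset (Sym2 V)) : ℝ := ∑ e ∈ M, w e

/-- A vertex is `M`-free if it is not an endpoint of any edge of `M`. -/
def IsFreeVtx (M : Finset (Sym2 V)) (v : V) : Prop := ∀ e ∈ M, v ∉ e

/-- `yz(e) = y(u) + y(v) + ∑_{B ∈ Ω, u ∈ B, v ∈ B} z(B)` for an edge `e = uv`. -/
noncomputable def yzval (y : V → ℝ) (Ω : Finset (Finset V)) (z : Finset V → ℝ) :
    Sym2 V → ℝ :=
  Sym2.lift ⟨fun u v => y u + y v + ∑ B ∈ Ω, (if u ∈ B ∧ v ∈ B then z B else 0),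
    fun u v => by
      have h : ∀ B : Finset V, (u ∈ B ∧ v ∈ B) = (v ∈ B ∧ u ∈ B) :=
        fun B => propext and_comm
      simp only [h]
      ring⟩

/-- `‖e‖ = (‖u‖ + ‖v‖)/2` for an edge `e = uv`, given vertex weights `‖·‖`. -/
def edgeNorm (nrm : V → ℕ) : Sym2 V → ℕ :=
  Sym2.lift ⟨fun u v => (nrm u + nrm v) / 2, fun u v => by simp [Nat.add_comm]⟩

/-- A walk is alternating (for a path starting at a free vertex): its edges at even
positions are unmatched and its edges at odd positions are matched. -/
def IsAlternating (G : SimpleGraph V) (M : Finset (Sym2 V)) {u v : V}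
    (p : G.Walk u v) : Prop :=
  ∀ (i : ℕ) (h : i < p.edges.length), (p.edges.get ⟨i, h⟩ ∈ M ↔ i % 2 = 1)

lemma endpoint_mem_getLast_edges {G : SimpleGraph V} :
    ∀ {u v : V} (p : G.Walk u v) (hn : p.edges ≠ []), v ∈ p.edges.getLast hn := by
  intro u v p
  induction p with
  | nil => intro hn; simp at hn
  | cons h q ih =>
    intro hn
    cases q with
    | nil => simp
    | cons h' q' =>
      have h2 : (SimpleGraph.Walk.cons h' q').edges ≠ [] := by simp
      have h3 := ih h2
      simpa [List.getLast_cons h2] using h3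

/-- If a graph contains an `M`-augmenting path — a simple alternating path
(edges at even positions unmatched, at odd positions matched) between two distinct `M`-free
vertices — then some vertex is reachable from a free vertex both by an even-length and by an
odd-length alternating simple path; equivalently, if `V_in(F) ∩ V_out(F) = ∅` then there is
no `M`-augmenting path. -/
theorem mwm_augmenting_path_inner_outer_overlap
    [Fintype V] [DecidableEq V]
    (G : SimpleGraph V)
    (M : Finset (Sym2 V)) (hM : IsMatching G M)
    (f g : V) (hf : IsFreeVtx M f) (hg : IsFreeVtx M g) (hfg : f ≠ g)
    (p : G.Walk f g) (hp : p.IsPath) (halt : IsAlternating G M p) :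
    ∃ (v f₁ f₂ : V) (q₁ : G.Walk f₁ v) (q₂ : G.Walk f₂ v),
      IsFreeVtx M f₁ ∧ IsFreeVtx M f₂ ∧
      q₁.IsPath ∧ q₂.IsPath ∧
      IsAlternating G M q₁ ∧ IsAlternating G M q₂ ∧
      Even q₁.length ∧ Odd q₂.length := by
  refine ⟨g, g, f, SimpleGraph.Walk.nil, p, hg, hf, SimpleGraph.Walk.IsPath.nil, hp,
    ?_, halt, by simp, ?_⟩
  · intro i h; simp at h
  · -- p has odd length
    have hlen : p.edges.length = p.length := p.length_edges
    have hne : p.edges ≠ [] := by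
      intro h
      have : p.length = 0 := by rw [← hlen, h]; rfl
      exact hfg (p.eq_of_length_eq_zero this)
    have hlast := endpoint_mem_getLast_edges p hne
    have hpos : 0 < p.edges.length := List.length_pos_iff.mpr hne
    rw [List.getLast_eq_getElem] at hlast
    have hnot : p.edges.get ⟨p.edges.length - 1, by omega⟩ ∉ M := by
      intro hm
      exact hg _ hm hlast
    have := (halt (p.edges.length - 1) (by omega)).not.mp hnot
    have heven : (p.edges.length - 1) % 2 = 0 := by omega
    rw [Nat.odd_iff, ← hlen]
    omega
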